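/- arXiv:2308.01798 — 3 statements merged into one kernel-verified Lean document; each statement's English description precedes it below -/
import Mathlib

section
/- Let C and D be small categories and p : C ⥤ D a fully faithful functor. Suppose that for every functor V : D ⥤ Type, writing U := Lan_p (V ∘ p) (the left Kan extension of the restriction of V along p) with counit α : U ⟶ V, the induced map colim U → colim V is an isomorphism. Then p is final, i.e. each comma category StructuredArrow d p is connected. -/
open CategoryTheory CategoryTheory.Limits

/-- Let `p : C ⥤ D` be fully faithful.  If for every functor `V : D ⥤ Type`, writing
`U := Lan_p (V ∘ p)` with counit `α : U ⟶ V`, the induced map `colim U ⟶ colim V`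
is an isomorphism, then `p` is final. -/
theorem stmt2 {C D : Type u} [SmallCategory C] [SmallCategory D] (p : C ⥤ D)
    [p.Full] [p.Faithful]
    (h : ∀ V : D ⥤ Type u,
      IsIso (colim.map ((p.lanAdjunction (Type u)).counit.app V))) :
    p.Final := by
  rw [Functor.final_iff_isIso_colimit_pre]
  intro V
  have := h V
  have key : (Functor.colimitIsoOfIsLeftKanExtension (p.lan.obj (p ⋙ V))
        (p.lanUnit.app (p ⋙ V))).inv ≫
      colim.map ((p.lanAdjunction (Type u)).counit.app V) = colimit.pre V p := by
    apply colimit.hom_ext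
    intro i
    rw [Functor.ι_colimitIsoOfIsLeftKanExtension_inv_assoc]
    simp only [colim_map, ι_colimMap, colimit.ι_pre]
    rw [← Category.assoc]
    have := p.lanUnit_app_app_lanAdjunction_counit_app_app V i
    dsimp at this ⊢
    rw [this, Category.id_comp]
    exact (colimit.ι_pre V p i).symm
  rw [← key]
  infer_instance
end

section
/- A small category K is sifted if and only if the colimit functor colim : (K ⥤ Type) ⥤ Type preserves finite products. -/
open CategoryTheory CategoryTheory.Limits

universe u

namespace Stmt10Aux

variable {K : Type u} [SmallCategory K]

/-- External product of two `Type`-valued functors. -/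
@[simps]
def prodExt (F G : K ⥤ Type u) : K × K ⥤ Type u where
  obj p := F.obj p.1 × G.obj p.2
  map f := TypeCat.ofHom (Prod.map (F.map f.1) (G.map f.2))

/-- Pointwise product. -/
abbrev ptProd (F G : K ⥤ Type u) : K ⥤ Type u :=
  CategoryTheory.Functor.diag K ⋙ prodExt F G

/-- First projection. -/
@[simps]
def ptFst (F G : K ⥤ Type u) : ptProd F G ⟶ F where
  app k := TypeCat.ofHom Prod.fst
  naturality _ _ f := rfl

@[simps]
def ptSnd (F G : K ⥤ Type u) : ptProd F G ⟶ G where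
  app k := TypeCat.ofHom Prod.snd
  naturality _ _ f := rfl

/-- The pointwise-product binary fan. -/
abbrev ptFan (F G : K ⥤ Type u) : BinaryFan F G :=
  BinaryFan.mk (ptFst F G) (ptSnd F G)

def ptFanIsLimit (F G : K ⥤ Type u) : IsLimit (ptFan F G) :=
  BinaryFan.isLimitMk
    (fun s =>
      { app := fun k => TypeCat.ofHom (fun x => (s.fst.app k x, s.snd.app k x))
        naturality := fun j k f => by
          refine ConcreteCategory.hom_ext _ _ (fun x => ?_)
          have h1 := ConcreteCategory.congr_hom (s.fst.naturality f) x
          have h2 := ConcreteCategory.congr_hom (s.snd.naturality f) x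
          simp only [types_comp_apply] at h1 h2 ⊢
          exact Prod.ext h1 h2 })
    (fun s => rfl)
    (fun s => rfl)
    (fun s m h₁ h₂ => by
      ext k x
      exact Prod.ext (ConcreteCategory.congr_hom (congrFun (congrArg NatTrans.app h₁) k) x :)
        (ConcreteCategory.congr_hom (congrFun (congrArg NatTrans.app h₂) k) x :))

/-- The comparison cocone for the external product. -/
@[simps]
noncomputable def prodExtCocone (F G : K ⥤ Type u) : Cocone (prodExt F G) where
  pt := colimit F × colimit G
  ι :=
    { app := fun p => TypeCat.ofHom (fun x => (colimit.ι F p.1 x.1, colimit.ι G p.2 x.2))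
      naturality := fun p q f => by
        ext x
        exact Prod.ext (Types.Colimit.w_apply f.1) (Types.Colimit.w_apply f.2) }

noncomputable def prodExtDesc (F G : K ⥤ Type u) :
    colimit (prodExt F G) ⟶ (colimit F × colimit G) :=
  colimit.desc _ (prodExtCocone F G)

lemma eqvGen_left (F G : K ⥤ Type u) {x y : Σ k, F.obj k}
    (h : Relation.EqvGen F.ColimitTypeRel x y) (l : K) (b : G.obj l) :
    colimit.ι (prodExt F G) (x.1, l) (x.2, b) = colimit.ι (prodExt F G) (y.1, l) (y.2, b) := by
  induction h with
  | rel p q hpq =>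
      obtain ⟨f, hf⟩ := hpq
      exact Types.colimit_sound ((f, 𝟙 l) : (p.1, l) ⟶ (q.1, l))
        (by rw [hf]; exact Prod.ext rfl (ConcreteCategory.congr_hom (G.map_id l) b :))
  | refl _ => rfl
  | symm _ _ _ ih => exact ih.symm
  | trans _ _ _ _ _ ih₁ ih₂ => exact ih₁.trans ih₂

lemma eqvGen_right (F G : K ⥤ Type u) {x y : Σ l, G.obj l}
    (h : Relation.EqvGen G.ColimitTypeRel x y) (k : K) (a : F.obj k) :
    colimit.ι (prodExt F G) (k, x.1) (a, x.2) = colimit.ι (prodExt F G) (k, y.1) (a, y.2) := by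
  induction h with
  | rel p q hpq =>
      obtain ⟨f, hf⟩ := hpq
      exact Types.colimit_sound ((𝟙 k, f) : (k, p.1) ⟶ (k, q.1))
        (by rw [hf]; exact Prod.ext (ConcreteCategory.congr_hom (F.map_id k) a :) rfl)
  | refl _ => rfl
  | symm _ _ _ ih => exact ih.symm
  | trans _ _ _ _ _ ih₁ ih₂ => exact ih₁.trans ih₂

lemma prodExtDesc_bijective (F G : K ⥤ Type u) :
    Function.Bijective (prodExtDesc F G) := by
  constructor
  · intro z w h
    obtain ⟨⟨k, l⟩, ⟨a, b⟩, rfl⟩ := Types.jointly_surjective' z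
    obtain ⟨⟨k', l'⟩, ⟨a', b'⟩, rfl⟩ := Types.jointly_surjective' w
    erw [prodExtDesc, Types.Colimit.ι_desc_apply, Types.Colimit.ι_desc_apply] at h
    have h₁ : colimit.ι F k a = colimit.ι F k' a' := congrArg Prod.fst h
    have h₂ : colimit.ι G l b = colimit.ι G l' b' := congrArg Prod.snd h
    calc colimit.ι (prodExt F G) (k, l) (a, b)
        = colimit.ι (prodExt F G) (k', l) (a', b) :=
          eqvGen_left F G (Types.colimit_eq h₁) l b
      _ = colimit.ι (prodExt F G) (k', l') (a', b') :=
          eqvGen_right F G (Types.colimit_eq h₂) k' a'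
  · rintro ⟨x, y⟩
    obtain ⟨k, a, rfl⟩ := Types.jointly_surjective' x
    obtain ⟨l, b, rfl⟩ := Types.jointly_surjective' y
    exact ⟨colimit.ι (prodExt F G) (k, l) (a, b), by
      erw [prodExtDesc, Types.Colimit.ι_desc_apply]; rfl⟩

end Stmt10Aux


open Stmt10Aux in
/-- A small category `K` is sifted if and only if the colimit functor
`colim : (K ⥤ Type) ⥤ Type` preserves finite products. -/
theorem stmt10 {K : Type u} [SmallCategory K] :
    IsSifted K ↔
      Nonempty (PreservesFiniteProducts (colim : (K ⥤ Type u) ⥤ Type u)) := by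
  constructor
  · intro hs
    -- terminal
    have hterm : IsTerminal (Types.constPUnitFunctor.{u} K) :=
      IsTerminal.ofUniqueHom
        (fun F => { app := fun k => TypeCat.ofHom (fun _ => PUnit.unit), naturality := fun _ _ _ => rfl })
        (fun F m => by ext k x; rfl)
    have iterm : (colim : (K ⥤ Type u) ⥤ Type u).obj (⊤_ (K ⥤ Type u)) ≅ ⊤_ (Type u) :=
      colim.mapIso (terminalIsTerminal.uniqueUpToIso hterm) ≪≫
        Types.colimitConstPUnitIsoPUnit.{u} K ≪≫ (Types.terminalIso).symm
    haveI : PreservesLimit (Functor.empty.{0} (K ⥤ Type u)) (colim : (K ⥤ Type u) ⥤ Type u) :=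
      preservesTerminal_of_iso _ iterm
    haveI : PreservesLimitsOfShape (Discrete PEmpty.{1}) (colim : (K ⥤ Type u) ⥤ Type u) :=
      preservesLimitsOfShape_pempty_of_preservesTerminal _
    -- binary
    haveI : PreservesLimitsOfShape (Discrete WalkingPair) (colim : (K ⥤ Type u) ⥤ Type u) := by
      constructor
      intro D
      set F := D.obj ⟨WalkingPair.left⟩ with hF
      set G := D.obj ⟨WalkingPair.right⟩ with hG
      have hp : PreservesLimit (pair F G) (colim : (K ⥤ Type u) ⥤ Type u) := ?_
      · exact preservesLimit_of_iso_diagram (colim : (K ⥤ Type u) ⥤ Type u)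
          (diagramIsoPair D).symm
      have θbij : Function.Bijective
          ((Functor.Final.colimitIso (Functor.diag K) (prodExt F G)).hom ≫ prodExtDesc F G) := by
        exact (Function.Bijective.comp (prodExtDesc_bijective F G)
          ((isIso_iff_bijective (Functor.Final.colimitIso (Functor.diag K) (prodExt F G)).hom).1 inferInstance) :)
      set θ : (colim : (K ⥤ Type u) ⥤ Type u).obj (ptProd F G) ⟶ colimit F × colimit G :=
        (Functor.Final.colimitIso (Functor.diag K) (prodExt F G)).hom ≫ prodExtDesc F G with hθ
      haveI : IsIso θ := (isIso_iff_bijective θ).2 θbij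
      have key₁ : colim.map (ptFst F G) = θ ≫ TypeCat.ofHom _root_.Prod.fst := by
        apply colimit.hom_ext
        intro k
        rw [colimit.ι_map]
        refine ConcreteCategory.hom_ext _ _ (fun x => ?_)
        have h1 := ConcreteCategory.congr_hom (colimit.ι_pre (prodExt F G) (Functor.diag K) k) x
        simp only [types_comp_apply] at h1 ⊢
        rw [hθ]
        simp only [Functor.Final.colimitIso, asIso_hom, types_comp_apply]
        rw [h1]
        erw [prodExtDesc, Types.Colimit.ι_desc_apply]
        rfl
      have key₂ : colim.map (ptSnd F G) = θ ≫ TypeCat.ofHom _root_.Prod.snd := by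
        apply colimit.hom_ext
        intro k
        rw [colimit.ι_map]
        refine ConcreteCategory.hom_ext _ _ (fun x => ?_)
        have h1 := ConcreteCategory.congr_hom (colimit.ι_pre (prodExt F G) (Functor.diag K) k) x
        simp only [types_comp_apply] at h1 ⊢
        rw [hθ]
        simp only [Functor.Final.colimitIso, asIso_hom, types_comp_apply]
        rw [h1]
        erw [prodExtDesc, Types.Colimit.ι_desc_apply]
        rfl
      apply preservesLimit_of_preserves_limit_cone (ptFanIsLimit F G)
      apply (isLimitMapConeBinaryFanEquiv colim (ptFst F G) (ptSnd F G)).symm ?_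
      refine IsLimit.ofIsoLimit (Types.binaryProductLimit (colimit F) (colimit G))
        (Cones.ext (asIso θ).symm ?_)
      rintro ⟨⟨⟩⟩
      · dsimp
        exact ((IsIso.inv_comp_eq θ).2 key₁).symm
      · dsimp
        exact ((IsIso.inv_comp_eq θ).2 key₂).symm
    exact ⟨PreservesFiniteProducts.of_preserves_binary_and_terminal colim⟩
  · rintro ⟨inst⟩
    haveI : PreservesLimitsOfShape (Discrete PEmpty.{1}) (colim : (K ⥤ Type u) ⥤ Type u) := inferInstance
    haveI : PreservesLimitsOfShape (Discrete WalkingPair) (colim : (K ⥤ Type u) ⥤ Type u) := inferInstance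
    have hne : Nonempty K := by
      let i := PreservesTerminal.iso (colim : (K ⥤ Type u) ⥤ Type u)
      have x : colimit (⊤_ (K ⥤ Type u)) := i.inv (Types.terminalIso.inv PUnit.unit)
      obtain ⟨k, -, -⟩ := Types.jointly_surjective' x
      exact ⟨k⟩
    have : IsSiftedOrEmpty K := by
      apply Functor.final_of_colimit_comp_coyoneda_iso_pUnit
      rintro ⟨k, l⟩
      let cyk := coyoneda.obj (Opposite.op k)
      let cyl := coyoneda.obj (Opposite.op l)
      refine Nonempty.some ?_
      refine ⟨?_⟩
      calc colimit (Functor.diag K ⋙ coyoneda.obj (Opposite.op (k, l)))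
          ≅ colimit (ptProd cyk cyl) :=
            HasColimit.isoOfNatIso (NatIso.ofComponents (fun m => Iso.refl _)
              (fun f => by ext x; rfl))
        _ ≅ colimit (cyk ⨯ cyl) :=
            HasColimit.isoOfNatIso
              ((limit.isLimit (pair cyk cyl)).conePointUniqueUpToIso (ptFanIsLimit cyk cyl)).symm
        _ ≅ colimit cyk ⨯ colimit cyl := PreservesLimitPair.iso colim cyk cyl
        _ ≅ colimit cyk × colimit cyl := Types.binaryProductIso _ _
        _ ≅ PUnit × PUnit :=
            ((Coyoneda.colimitCoyonedaIso (Opposite.op k)).toEquiv.prodCongr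
              (Coyoneda.colimitCoyonedaIso (Opposite.op l)).toEquiv).toIso
        _ ≅ PUnit := (Equiv.prodPUnit PUnit).toIso
    haveI := hne
    exact ⟨⟩
end

section
/- Let C be a small category and X a presheaf on C lying in the sifted completion sInd(C) (i.e. X is a colimit of representables over a sifted index category). Then the category of elements of X, equivalently the comma category C ↓ X of representables over X, is sifted. -/
open CategoryTheory CategoryTheory.Limits CategoryTheory.Functor

namespace Stmt17Aux

universe v₁ v₂ v₃ v₄ u₁ u₂ u₃ u₄

variable {C : Type u₁} [Category.{v₁} C] {D : Type u₂} [Category.{v₂} D]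
  {C' : Type u₃} [Category.{v₃} C'] {D' : Type u₄} [Category.{v₄} D']

/-- Fixing the second component. -/
@[simps]
def fixSnd (F : C ⥤ D) (G : C' ⥤ D') (d : D) (d' : D') (b : StructuredArrow d' G) :
    StructuredArrow d F ⥤ StructuredArrow (d, d') (F.prod G) where
  obj a := StructuredArrow.mk (Y := (a.right, b.right))
    ((a.hom, b.hom) : (d, d') ⟶ (F.prod G).obj (a.right, b.right))
  map {a a'} φ := StructuredArrow.homMk (φ.right, 𝟙 b.right)
    (by ext <;> simp)

/-- Fixing the first component. -/
@[simps]
def fixFst (F : C ⥤ D) (G : C' ⥤ D') (d : D) (d' : D') (a : StructuredArrow d F) :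
    StructuredArrow d' G ⥤ StructuredArrow (d, d') (F.prod G) where
  obj b := StructuredArrow.mk (Y := (a.right, b.right))
    ((a.hom, b.hom) : (d, d') ⟶ (F.prod G).obj (a.right, b.right))
  map {b b'} φ := StructuredArrow.homMk (𝟙 a.right, φ.right)
    (by ext <;> simp)

lemma prod_final (F : C ⥤ D) (G : C' ⥤ D') [F.Final] [G.Final] : (F.prod G).Final := by
  constructor
  rintro ⟨d, d'⟩
  have h₁ : IsConnected (StructuredArrow d F) := Functor.Final.out d
  have h₂ : IsConnected (StructuredArrow d' G) := Functor.Final.out d'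
  have : Nonempty (StructuredArrow (d, d') (F.prod G)) :=
    ⟨(fixSnd F G d d' (Classical.arbitrary _)).obj (Classical.arbitrary _)⟩
  apply zigzag_isConnected
  intro p q
  let ap : StructuredArrow d F := StructuredArrow.mk p.hom.1
  let bp : StructuredArrow d' G := StructuredArrow.mk p.hom.2
  let aq : StructuredArrow d F := StructuredArrow.mk q.hom.1
  let bq : StructuredArrow d' G := StructuredArrow.mk q.hom.2
  have e₁ : p ≅ (fixSnd F G d d' bp).obj ap := StructuredArrow.isoMk (Iso.refl _)
    (by erw [CategoryTheory.Functor.map_id, Category.comp_id]; rfl)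
  have e₂ : (fixSnd F G d d' bp).obj aq = (fixFst F G d d' aq).obj bp := rfl
  have e₃ : q ≅ (fixFst F G d d' aq).obj bq := StructuredArrow.isoMk (Iso.refl _)
    (by erw [CategoryTheory.Functor.map_id, Category.comp_id]; rfl)
  have z₁ : Zigzag ((fixSnd F G d d' bp).obj ap) ((fixSnd F G d d' bp).obj aq) :=
    zigzag_obj_of_zigzag _ (isPreconnected_zigzag ap aq)
  have z₂ : Zigzag ((fixFst F G d d' aq).obj bp) ((fixFst F G d d' aq).obj bq) :=
    zigzag_obj_of_zigzag _ (isPreconnected_zigzag bp bq)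
  have z₀ : Zigzag p ((fixSnd F G d d' bp).obj ap) :=
    Relation.ReflTransGen.single (Zag.of_hom e₁.hom)
  have z₃ : Zigzag ((fixFst F G d d' aq).obj bq) q :=
    Relation.ReflTransGen.single (Zag.of_inv e₃.hom)
  exact z₀.trans ((z₁.trans (e₂ ▸ z₂)).trans z₃)

end Stmt17Aux



open CategoryTheory CategoryTheory.Limits

/-- If a presheaf `X` on a small category `C` lies in the sifted completion of `C`
(i.e. `X` is a colimit of representables indexed by a sifted category), then the comma
category of representables over `X` (equivalently, the category of elements of `X`)
is sifted. -/
theorem stmt17 {C : Type u} [SmallCategory C] (X : Cᵒᵖ ⥤ Type u)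
    (h : ∃ (J : Type u) (_ : SmallCategory J) (_ : IsSifted J) (G : J ⥤ C),
        Nonempty (colimit (G ⋙ yoneda) ≅ X)) :
    IsSifted (CostructuredArrow yoneda X) := by
  obtain ⟨J, _, hJ, G, ⟨iso⟩⟩ := h
  let c : Cocone (G ⋙ yoneda) :=
    ⟨X, (colimit.cocone (G ⋙ yoneda)).ι ≫ (Functor.const J).map iso.hom⟩
  have hc : IsColimit c :=
    (colimit.isColimit _).ofIsoColimit (Cocones.ext iso (by intro j; rfl))
  let K : J ⥤ CostructuredArrow yoneda X :=
    c.toCostructuredArrow ⋙ CostructuredArrow.pre G yoneda c.pt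
  have hK : K.Final := Presheaf.final_toCostructuredArrow_comp_pre _ hc
  have hdiagJ : (Functor.diag J).Final := by haveI := hJ; infer_instance
  have hKK : (K.prod K).Final := Stmt17Aux.prod_final K K
  have hcomp : (Functor.diag J ⋙ K.prod K).Final := Functor.final_comp _ _
  have e : Functor.diag J ⋙ K.prod K ≅ K ⋙ Functor.diag _ :=
    NatIso.ofComponents (fun j => Iso.refl _) (by intros; dsimp [K]; aesop_cat)
  have : (K ⋙ Functor.diag (CostructuredArrow yoneda X)).Final := Functor.final_of_natIso e
  have : (Functor.diag (CostructuredArrow yoneda X)).Final := Functor.final_of_final_comp K _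
  have : Nonempty (CostructuredArrow yoneda X) := ⟨K.obj (Classical.arbitrary _)⟩
  constructor
end
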